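/- In a lattice-normed Riesz space (X, p, E), the following are equivalent: (i) every statistically order convergent sequence with limit 0 in X is statistically p-convergent to 0; (ii) every order convergent sequence with limit 0 in X is statistically p-convergent to 0. -/

import Mathlib

open scoped Classical

/-- `K ⊆ ℕ` has natural density `d`. -/
def HasDensity (K : Set ℕ) (d : ℝ) : Prop :=
  Filter.Tendsto
    (fun n => (((Finset.range n).filter (fun k => k ∈ K)).card : ℝ) / n)
    Filter.atTop (nhds d)

/-- Statistical p-convergence of a sequence `x` to `x₀` in a lattice-normed space `(X, p, E)`:
there is a sequence `q` in `E`, decreasing along an index set `K` of density 1 with infimum `0`,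
dominating `p (x n - x₀)` on `K`. -/
def StatPConv {X E : Type*} [AddCommGroup X] [AddCommGroup E] [Lattice E]
    (p : X → E) (x : ℕ → X) (x₀ : X) : Prop :=
  ∃ (q : ℕ → E) (K : Set ℕ), HasDensity K 1 ∧
    (∀ m ∈ K, ∀ n ∈ K, m ≤ n → q n ≤ q m) ∧
    IsGLB (q '' K) 0 ∧
    ∀ n ∈ K, p (x n - x₀) ≤ q n

private lemma card_filter_univ (n : ℕ) (inst : DecidablePred (· ∈ (Set.univ : Set ℕ))) :
    (@Finset.filter _ _ inst (Finset.range n)).card = n := by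
  rw [Finset.filter_true_of_mem (fun k _ => Set.mem_univ k), Finset.card_range]

private lemma card_filter_Ici (m n : ℕ) (inst : DecidablePred (· ∈ (Set.Ici m : Set ℕ))) :
    (@Finset.filter _ _ inst (Finset.range n)).card = n - m := by
  have : @Finset.filter _ _ inst (Finset.range n) = Finset.Ico m n := by
    ext k
    simp only [Finset.mem_filter, Finset.mem_range, Finset.mem_Ico, Set.mem_Ici]
    tauto
  rw [this, Nat.card_Ico]

private lemma hasDensity_univ : HasDensity (Set.univ : Set ℕ) 1 := by
  refine Filter.Tendsto.congr' ?_ tendsto_const_nhds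
  filter_upwards [Filter.eventually_ge_atTop 1] with n hn
  show (1 : ℝ) = _
  rw [card_filter_univ]
  rw [eq_comm, div_self]
  exact_mod_cast Nat.one_le_iff_ne_zero.mp hn

private lemma hasDensity_Ici (m : ℕ) : HasDensity (Set.Ici m) 1 := by
  have hlim : Filter.Tendsto (fun n : ℕ => 1 - (m : ℝ) / n) Filter.atTop (nhds 1) := by
    have := (tendsto_const_div_atTop_nhds_zero_nat (m : ℝ)).const_sub 1
    simpa using this
  refine Filter.Tendsto.congr' ?_ hlim
  filter_upwards [Filter.eventually_ge_atTop (max m 1)] with n hn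
  show 1 - (m : ℝ) / n = _
  rw [card_filter_Ici]
  have hm : m ≤ n := le_trans (le_max_left _ _) hn
  have hn0 : (n : ℝ) ≠ 0 := by
    have : (1 : ℕ) ≤ n := le_trans (le_max_right _ _) hn
    exact_mod_cast Nat.one_le_iff_ne_zero.mp this
  rw [Nat.cast_sub hm, sub_div, div_self hn0]

private lemma hasDensity_inter {K L : Set ℕ} (hK : HasDensity K 1) (hL : HasDensity L 1) :
    HasDensity (K ∩ L) 1 := by
  set a : ℕ → ℕ := fun n => ((Finset.range n).filter (fun k => k ∈ K)).card with ha
  set b : ℕ → ℕ := fun n => ((Finset.range n).filter (fun k => k ∈ L)).card with hb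
  set c : ℕ → ℕ := fun n =>
    (@Finset.filter _ (fun k => k ∈ K ∩ L) (fun a => Classical.propDecidable _)
      (Finset.range n)).card with hc
  have hcab : ∀ n, a n + b n ≤ n + c n := by
    intro n
    have hunion : (((Finset.range n).filter (fun k => k ∈ K)) ∪
        ((Finset.range n).filter (fun k => k ∈ L))).card ≤ n := by
      refine le_trans (Finset.card_le_card ?_) (by rw [Finset.card_range])
      intro k hk
      rcases Finset.mem_union.mp hk with h | h
      · exact Finset.mem_of_mem_filter k h
      · exact Finset.mem_of_mem_filter k h
    have hinter : ((Finset.range n).filter (fun k => k ∈ K)) ∩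
        ((Finset.range n).filter (fun k => k ∈ L)) =
        @Finset.filter _ (fun k => k ∈ K ∩ L) (fun a => Classical.propDecidable _)
          (Finset.range n) := by
      ext k
      simp only [Finset.mem_inter, Finset.mem_filter, Set.mem_inter_iff]
      tauto
    have := Finset.card_union_add_card_inter
      ((Finset.range n).filter (fun k => k ∈ K)) ((Finset.range n).filter (fun k => k ∈ L))
    rw [hinter] at this
    simp only [ha, hb, hc]
    omega
  have hca : ∀ n, c n ≤ a n := by
    intro n
    apply Finset.card_le_card
    intro k hk
    simp only [Finset.mem_filter, Set.mem_inter_iff] at hk ⊢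
    exact ⟨hk.1, hk.2.1⟩
  have hlow : ∀ n : ℕ, (a n : ℝ) / n + (b n : ℝ) / n - 1 ≤ (c n : ℝ) / n := by
    intro n
    rcases Nat.eq_zero_or_pos n with h0 | hpos
    · subst h0; simp
    · have hn0 : (0 : ℝ) < n := by exact_mod_cast hpos
      rw [← add_div, sub_le_iff_le_add, ← div_self (ne_of_gt hn0), ← add_div]
      have hcast : (a n : ℝ) + b n ≤ (c n : ℝ) + n := by
        have h1 : ((a n + b n : ℕ) : ℝ) ≤ ((n + c n : ℕ) : ℝ) := Nat.cast_le.mpr (hcab n)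
        push_cast at h1
        linarith
      exact div_le_div_of_nonneg_right hcast (le_of_lt hn0)
  have hhigh : ∀ n : ℕ, (c n : ℝ) / n ≤ (a n : ℝ) / n := by
    intro n
    exact div_le_div_of_nonneg_right (by exact_mod_cast hca n) (Nat.cast_nonneg n)
  have htlow : Filter.Tendsto (fun n : ℕ => (a n : ℝ) / n + (b n : ℝ) / n - 1)
      Filter.atTop (nhds 1) := by
    have := (hK.add hL).sub_const 1
    norm_num at this
    convert this using 2 <;> ring
  exact tendsto_of_tendsto_of_tendsto_of_le_of_le htlow hK (fun n => hlow n) (fun n => hhigh n)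

private lemma hasDensity_exists_ge {K : Set ℕ} (hK : HasDensity K 1) (N : ℕ) :
    ∃ k ∈ K, N ≤ k := by
  by_contra h
  push_neg at h
  have hsub : ∀ n, ((Finset.range n).filter (fun k => k ∈ K)).card ≤ N := by
    intro n
    refine le_trans (Finset.card_le_card ?_) (by rw [Finset.card_range])
    intro k hk
    rw [Finset.mem_filter] at hk
    exact Finset.mem_range.mpr (h k hk.2)
  have h0 : Filter.Tendsto
      (fun n : ℕ => (((Finset.range n).filter (fun k => k ∈ K)).card : ℝ) / n)
      Filter.atTop (nhds 0) := by
    apply tendsto_of_tendsto_of_tendsto_of_le_of_le tendsto_const_nhds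
      (tendsto_const_div_atTop_nhds_zero_nat (N : ℝ))
    · intro n; positivity
    · intro n
      rcases Nat.eq_zero_or_pos n with h0 | hpos
      · subst h0; simp
      · exact div_le_div_of_nonneg_right (Nat.cast_le.mpr (by convert hsub n)) (Nat.cast_nonneg n)
  exact one_ne_zero (tendsto_nhds_unique hK h0)

/-- In a lattice-normed Riesz space the following are equivalent:
(i) every statistically order convergent to 0 sequence is statistically p-convergent to 0;
(ii) every order convergent to 0 sequence is statistically p-convergent to 0. -/
theorem statOrderConv_to_statPConv_iff_orderConv {X E : Type*} [AddCommGroup X] [Lattice X] [CovariantClass X X (· + ·) (· ≤ ·)] [Module ℝ X]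
    [AddCommGroup E] [Lattice E] [CovariantClass E E (· + ·) (· ≤ ·)] [Module ℝ E]
    (p : X → E)
    (hp0 : ∀ v : X, 0 ≤ p v)
    (hpeq : ∀ v : X, p v = 0 ↔ v = 0)
    (hpsmul : ∀ (c : ℝ) (v : X), p (c • v) = |c| • p v)
    (hptri : ∀ v w : X, p (v + w) ≤ p v + p w)
    (hpmono : ∀ v w : X, |v| ≤ |w| → p v ≤ p w) :
    (∀ x : ℕ → X,
        (∃ (t : ℕ → X) (K : Set ℕ), HasDensity K 1 ∧
          (∀ m ∈ K, ∀ n ∈ K, m ≤ n → t n ≤ t m) ∧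
          IsGLB (t '' K) 0 ∧ ∀ n ∈ K, |x n| ≤ t n) →
        StatPConv p x 0) ↔
      (∀ x : ℕ → X,
        (∃ t : ℕ → X, Antitone t ∧ IsGLB (Set.range t) 0 ∧ ∀ n, |x n| ≤ t n) →
        StatPConv p x 0) := by
  constructor
  · intro H x ⟨t, htanti, htglb, htle⟩
    apply H x
    refine ⟨t, Set.univ, hasDensity_univ, ?_, ?_, ?_⟩
    · intro m _ n _ hmn; exact htanti hmn
    · rwa [Set.image_univ]
    · intro n _; exact htle n
  · intro H x ⟨t, K, hKd, htdec, htglb, htle⟩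
    -- pick k₀ ∈ K
    obtain ⟨k₀, hk₀K, -⟩ := hasDensity_exists_ge hKd 0
    set P : ℕ → Prop := fun k => k ∈ K ∧ k₀ ≤ k with hP
    set σ : ℕ → ℕ := fun n => max k₀ (Nat.findGreatest P n) with hσ
    have hσmem : ∀ n, σ n ∈ K ∧ k₀ ≤ σ n := by
      intro n
      rcases le_or_gt k₀ n with h | h
      · have hPg : P (Nat.findGreatest P n) := Nat.findGreatest_spec h ⟨hk₀K, le_refl _⟩
        have hle : k₀ ≤ Nat.findGreatest P n := hPg.2
        rw [hσ]; simp only [max_eq_right hle]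
        exact hPg
      · have hgle : Nat.findGreatest P n ≤ n := Nat.findGreatest_le n
        have : Nat.findGreatest P n ≤ k₀ := le_of_lt (lt_of_le_of_lt hgle h)
        rw [hσ]; simp only [max_eq_left this]
        exact ⟨hk₀K, le_refl _⟩
    have hσmono : Monotone σ := by
      intro m n hmn
      exact max_le_max (le_refl _) (Nat.findGreatest_mono (fun _ h => h) hmn)
    have hσeq : ∀ n ∈ K, k₀ ≤ n → σ n = n := by
      intro n hnK hk₀n
      have h1 : n ≤ Nat.findGreatest P n := Nat.le_findGreatest (le_refl n) ⟨hnK, hk₀n⟩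
      have h2 : Nat.findGreatest P n ≤ n := Nat.findGreatest_le n
      rw [hσ]; simp only [le_antisymm h2 h1]
      exact max_eq_right hk₀n
    set t' : ℕ → X := fun n => t (σ n) with ht'
    have ht'anti : Antitone t' := by
      intro m n hmn
      exact htdec (σ m) (hσmem m).1 (σ n) (hσmem n).1 (hσmono hmn)
    have hlbK : ∀ k ∈ K, (0 : X) ≤ t k := by
      intro k hk
      exact htglb.1 ⟨k, hk, rfl⟩
    have ht'glb : IsGLB (Set.range t') 0 := by
      constructor
      · rintro y ⟨n, rfl⟩
        exact hlbK (σ n) (hσmem n).1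
      · intro b hb
        apply htglb.2
        rintro y ⟨k, hkK, rfl⟩
        rcases le_or_gt k₀ k with h | h
        · have heq : t' k = t k := by show t (σ k) = t k; rw [hσeq k hkK h]
          rw [← heq]; exact hb ⟨k, rfl⟩
        · have h1 : b ≤ t' k₀ := hb ⟨k₀, rfl⟩
          have h2 : t' k₀ = t k₀ := by
            show t (σ k₀) = t k₀; rw [hσeq k₀ hk₀K (le_refl _)]
          have h3 : t k₀ ≤ t k := htdec k hkK k₀ hk₀K (le_of_lt h)
          exact le_trans h1 (le_trans (le_of_eq h2) h3)
    set x' : ℕ → X := fun n => if n ∈ K ∧ k₀ ≤ n then x n else 0 with hx'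
    have hx'le : ∀ n, |x' n| ≤ t' n := by
      intro n
      by_cases h : n ∈ K ∧ k₀ ≤ n
      · have hx'n : x' n = x n := by simp only [hx', if_pos h]
        have ht'n : t' n = t n := by show t (σ n) = t n; rw [hσeq n h.1 h.2]
        rw [hx'n, ht'n]
        exact htle n h.1
      · have hx'n : x' n = 0 := by simp only [hx', if_neg h]
        rw [hx'n, abs_zero]
        exact hlbK (σ n) (hσmem n).1
    obtain ⟨q, K', hK'd, hqdec, hqglb, hqle⟩ := H x' ⟨t', ht'anti, ht'glb, hx'le⟩
    set K'' : Set ℕ := (K ∩ Set.Ici k₀) ∩ K' with hK''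
    have hK''d : HasDensity K'' 1 :=
      hasDensity_inter (hasDensity_inter hKd (hasDensity_Ici k₀)) hK'd
    refine ⟨q, K'', hK''d, ?_, ?_, ?_⟩
    · intro m hm n hn hmn
      exact hqdec m hm.2 n hn.2 hmn
    · constructor
      · rintro y ⟨k, hk, rfl⟩
        exact hqglb.1 ⟨k, hk.2, rfl⟩
      · intro b hb
        apply hqglb.2
        rintro y ⟨k', hk'K', rfl⟩
        obtain ⟨k, hkK'', hk'k⟩ := hasDensity_exists_ge hK''d k'
        exact le_trans (hb ⟨k, hkK'', rfl⟩) (hqdec k' hk'K' k hkK''.2 hk'k)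
    · intro n hn
      have hx'eq : x' n = x n := by
        show (if n ∈ K ∧ k₀ ≤ n then x n else 0) = x n
        rw [if_pos (show n ∈ K ∧ k₀ ≤ n from ⟨hn.1.1, hn.1.2⟩)]
      have := hqle n hn.2
      rwa [hx'eq] at this
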